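/- Let μ ≠ 0, ρ ∈ ℝ, and let κ : I → ℝ be a C² function on an interval I satisfying (e^{μκ})'' + (κ² - κ/μ + ρ)e^{μκ} = 0. Then the function s ↦ (μ⁴·κ'(s)² + (μκ(s) - 1)² + ρμ²)·e^{2μκ(s)} is constant on I. Equivalently, there exists d ∈ ℝ with μ⁴ κ'² = d·e^{-2μκ} - (μκ - 1)² - ρμ² on I. -/

import Mathlib

theorem first_integral (μ ρ : ℝ) (hμ : μ ≠ 0) (I : Set ℝ) (hI : IsOpen I)
    (hconv : Convex ℝ I) (κ : ℝ → ℝ) (hκ : ContDiffOn ℝ 2 κ I)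
    (hEL : ∀ s ∈ I,
      deriv (deriv (fun t => Real.exp (μ * κ t))) s
        + (κ s ^ 2 - κ s / μ + ρ) * Real.exp (μ * κ s) = 0) :
    ∃ d : ℝ, ∀ s ∈ I,
      (μ ^ 4 * (deriv κ s) ^ 2 + (μ * κ s - 1) ^ 2 + ρ * μ ^ 2)
        * Real.exp (2 * μ * κ s) = d ∧
      μ ^ 4 * (deriv κ s) ^ 2
        = d * Real.exp (-(2 * μ * κ s)) - (μ * κ s - 1) ^ 2 - ρ * μ ^ 2 := by
  by_cases hne : I.Nonempty
  swap
  · exact ⟨0, fun s hs => absurd ⟨s, hs⟩ hne⟩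
  obtain ⟨s₀, hs₀⟩ := hne
  set F : ℝ → ℝ := fun s =>
    (μ ^ 4 * (deriv κ s) ^ 2 + (μ * κ s - 1) ^ 2 + ρ * μ ^ 2)
      * Real.exp (2 * μ * κ s) with hF
  have hκ1 : ContDiffOn ℝ 1 (deriv κ) I := hκ.deriv_of_isOpen hI (by norm_num)
  have hκdiff : ∀ s ∈ I, HasDerivAt κ (deriv κ s) s := fun s hs =>
    ((hκ.differentiableOn (by norm_num)).differentiableAt (hI.mem_nhds hs)).hasDerivAt
  have hκ'diff : ∀ s ∈ I, HasDerivAt (deriv κ) (deriv (deriv κ) s) s := fun s hs =>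
    ((hκ1.differentiableOn (by norm_num)).differentiableAt (hI.mem_nhds hs)).hasDerivAt
  have hE : ∀ s ∈ I, HasDerivAt (fun t => Real.exp (μ * κ t))
      (μ * deriv κ s * Real.exp (μ * κ s)) s := by
    intro s hs
    have := ((hκdiff s hs).const_mul μ).exp
    convert this using 1
    ring
  have hE2 : ∀ s ∈ I, deriv (deriv (fun t => Real.exp (μ * κ t))) s =
      (μ * deriv (deriv κ) s + μ ^ 2 * (deriv κ s) ^ 2) * Real.exp (μ * κ s) := by
    intro s hs
    have heq : deriv (fun t => Real.exp (μ * κ t))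
        =ᶠ[nhds s] fun t => μ * deriv κ t * Real.exp (μ * κ t) :=
      Filter.eventuallyEq_of_mem (hI.mem_nhds hs) fun t ht => (hE t ht).deriv
    rw [heq.deriv_eq]
    have h1 : HasDerivAt (fun t => μ * deriv κ t * Real.exp (μ * κ t))
        ((μ * deriv (deriv κ) s) * Real.exp (μ * κ s)
          + (μ * deriv κ s) * (μ * deriv κ s * Real.exp (μ * κ s))) s :=
      ((hκ'diff s hs).const_mul μ).mul (hE s hs)
    rw [h1.deriv]
    ring
  have hC : ∀ s ∈ I, μ ^ 3 * deriv (deriv κ) s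
      = -(μ ^ 4 * (deriv κ s) ^ 2) - μ ^ 2 * (κ s) ^ 2 + μ * κ s - ρ * μ ^ 2 := by
    intro s hs
    have h := hEL s hs
    rw [hE2 s hs] at h
    have h3 : (μ * deriv (deriv κ) s + μ ^ 2 * (deriv κ s) ^ 2
        + (κ s ^ 2 - κ s / μ + ρ)) * Real.exp (μ * κ s) = 0 := by
      linear_combination h
    have h4 : μ * deriv (deriv κ) s + μ ^ 2 * (deriv κ s) ^ 2
        + (κ s ^ 2 - κ s / μ + ρ) = 0 :=
      (mul_eq_zero.1 h3).resolve_right (Real.exp_ne_zero _)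
    field_simp at h4
    linear_combination μ * h4
  have hF0 : ∀ s ∈ I, HasDerivAt F 0 s := by
    intro s hs
    have hsq : HasDerivAt (fun t => (deriv κ t) ^ 2)
        ((2 : ℕ) * (deriv κ s) ^ 1 * deriv (deriv κ) s) s := (hκ'diff s hs).pow 2
    have hlin : HasDerivAt (fun t => (μ * κ t - 1) ^ 2)
        ((2 : ℕ) * (μ * κ s - 1) ^ 1 * (μ * deriv κ s)) s :=
      (((hκdiff s hs).const_mul μ).sub_const 1).pow 2
    have ha : HasDerivAt (fun t => μ ^ 4 * (deriv κ t) ^ 2 + (μ * κ t - 1) ^ 2 + ρ * μ ^ 2)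
        (μ ^ 4 * ((2 : ℕ) * (deriv κ s) ^ 1 * deriv (deriv κ) s)
          + (2 : ℕ) * (μ * κ s - 1) ^ 1 * (μ * deriv κ s)) s :=
      ((hsq.const_mul (μ ^ 4)).add hlin).add_const (ρ * μ ^ 2)
    have he2 : HasDerivAt (fun t => Real.exp (2 * μ * κ t))
        (2 * μ * deriv κ s * Real.exp (2 * μ * κ s)) s := by
      have := ((hκdiff s hs).const_mul (2 * μ)).exp
      convert this using 1
      ring
    have hFs := ha.mul he2
    refine hFs.congr_deriv (Eq.symm ?_)
    push_cast
    linear_combination (-(2 * μ * deriv κ s * Real.exp (2 * μ * κ s))) * hC s hs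
  have hdiffF : DifferentiableOn ℝ F I := fun s hs =>
    ((hF0 s hs).differentiableAt).differentiableWithinAt
  have hfderiv : ∀ s ∈ I, fderivWithin ℝ F I s = 0 := by
    intro s hs
    have h := ((hF0 s hs).hasFDerivAt).hasFDerivWithinAt.fderivWithin
      (hI.uniqueDiffOn s hs)
    rw [h]
    ext
    simp
  refine ⟨F s₀, fun s hs => ?_⟩
  have hconst : F s = F s₀ := hconv.is_const_of_fderivWithin_eq_zero hdiffF hfderiv hs hs₀
  refine ⟨hconst, ?_⟩
  have hexp : Real.exp (2 * μ * κ s) ≠ 0 := Real.exp_ne_zero _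
  rw [Real.exp_neg]
  rw [← hconst]
  simp only [hF]
  field_simp
  ring
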